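/- A Banach k-algebra A over a complete nonarchimedean rank-1 valued field k with nontrivial valuation is a Banach function algebra over k if and only if the subring A° of power-bounded elements is a bounded subset of A. -/

import Mathlib

/-!
STATEMENT 9: A Banach `k`-algebra `A` over a complete nonarchimedean nontrivially valued
field `k` is a Banach function algebra over `k` (its spectral radius function
`ρ(a) = inf_{n≥1} ‖aⁿ‖^{1/n}` is equivalent to the norm, expressed by `‖a‖ ≤ C·ρ(a)`;
`ρ ≤ ‖·‖` is automatic) if and only if the subring `A°` of power-bounded elements is a
bounded subset of `A`.
-/

noncomputable def specRad {A : Type*} [NormedRing A] (a : A) : ℝ :=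
  ⨅ n : ℕ+, ‖a ^ (n : ℕ)‖ ^ (((n : ℕ) : ℝ))⁻¹

def PowBdd {A : Type*} [NormedRing A] (a : A) : Prop := ∃ C : ℝ, ∀ n : ℕ, ‖a ^ n‖ ≤ C

lemma specRad_nonneg {A : Type*} [NormedRing A] (a : A) : 0 ≤ specRad a :=
  Real.iInf_nonneg fun _ => Real.rpow_nonneg (norm_nonneg _) _

lemma specRad_le {A : Type*} [NormedRing A] (a : A) (n : ℕ+) :
    specRad a ≤ ‖a ^ (n : ℕ)‖ ^ (((n : ℕ) : ℝ))⁻¹ :=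
  ciInf_le ⟨0, by rintro x ⟨m, rfl⟩; exact Real.rpow_nonneg (norm_nonneg _) _⟩ n

lemma powBdd_of_norm_pow_le {A : Type*} [NormedCommRing A] [NormOneClass A]
    {b : A} {m : ℕ} (hm : 0 < m) (h : ‖b ^ m‖ ≤ 1) : PowBdd b := by
  refine ⟨(max 1 ‖b‖) ^ m, fun n => ?_⟩
  have h1 : (1 : ℝ) ≤ max 1 ‖b‖ := le_max_left _ _
  calc ‖b ^ n‖ = ‖(b ^ m) ^ (n / m) * b ^ (n % m)‖ := by
        rw [← pow_mul, ← pow_add, Nat.div_add_mod]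
    _ ≤ ‖(b ^ m) ^ (n / m)‖ * ‖b ^ (n % m)‖ := norm_mul_le _ _
    _ ≤ ‖b ^ m‖ ^ (n / m) * ‖b‖ ^ (n % m) :=
        mul_le_mul (norm_pow_le _ _) (norm_pow_le _ _) (norm_nonneg _)
          (pow_nonneg (norm_nonneg _) _)
    _ ≤ 1 * (max 1 ‖b‖) ^ (n % m) :=
        mul_le_mul (pow_le_one₀ (norm_nonneg _) h)
          (pow_le_pow_left₀ (norm_nonneg _) (le_max_right _ _) _)
          (pow_nonneg (norm_nonneg _) _) zero_le_one
    _ = (max 1 ‖b‖) ^ (n % m) := one_mul _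
    _ ≤ (max 1 ‖b‖) ^ m := pow_le_pow_right₀ h1 (Nat.mod_lt n hm).le

theorem stmt9 {k A : Type*} [NontriviallyNormedField k] [CompleteSpace k]
    [IsUltrametricDist k] [NormedCommRing A] [NormOneClass A] [IsUltrametricDist A]
    [NormedAlgebra k A] [CompleteSpace A] :
    (∃ C > 0, ∀ a : A, ‖a‖ ≤ C * specRad a) ↔
      (∃ R > 0, ∀ a : A, PowBdd a → ‖a‖ ≤ R) := by
  constructor
  · rintro ⟨C, hC, h⟩
    refine ⟨C, hC, fun a ⟨C₀, hC₀⟩ => ?_⟩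
    have hs : specRad a ≤ 1 := by
      refine le_of_forall_gt_imp_ge_of_dense fun t ht => ?_
      obtain ⟨n, hn⟩ := pow_unbounded_of_one_lt (max 1 C₀) ht
      have hN : (0 : ℕ) < max n 1 := Nat.lt_of_lt_of_le Nat.one_pos (le_max_right _ _)
      set N : ℕ+ := ⟨max n 1, hN⟩
      have ht0 : (0 : ℝ) < t := lt_trans one_pos ht
      have hle : ‖a ^ (N : ℕ)‖ ≤ t ^ (N : ℕ) := by
        calc ‖a ^ (N : ℕ)‖ ≤ C₀ := hC₀ _
          _ ≤ max 1 C₀ := le_max_right _ _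
          _ ≤ t ^ n := hn.le
          _ ≤ t ^ (N : ℕ) := pow_le_pow_right₀ ht.le (le_max_left _ _)
      calc specRad a ≤ ‖a ^ (N : ℕ)‖ ^ (((N : ℕ) : ℝ))⁻¹ := specRad_le a N
        _ ≤ (t ^ (N : ℕ)) ^ (((N : ℕ) : ℝ))⁻¹ :=
            Real.rpow_le_rpow (norm_nonneg _) hle (by positivity)
        _ = t := Real.pow_rpow_inv_natCast ht0.le N.ne_zero
    calc ‖a‖ ≤ C * specRad a := h a
      _ ≤ C * 1 := by nlinarith
      _ = C := mul_one C
  · rintro ⟨R, hR, h⟩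
    obtain ⟨π, hπ0, hπ1⟩ := NormedField.exists_norm_lt_one k
    have key : ∀ (a : A) (c : k), ‖c‖ * specRad a < 1 → ‖c‖ * ‖a‖ ≤ R := by
      intro a c hca
      rcases eq_or_ne c 0 with rfl | hc
      · simpa using hR.le
      have hc0 : 0 < ‖c‖ := norm_pos_iff.mpr hc
      have hlt : specRad a < 1 / ‖c‖ := by
        rw [lt_div_iff₀ hc0]; linarith [mul_comm ‖c‖ (specRad a)]
      obtain ⟨m, hm⟩ : ∃ m : ℕ+, ‖a ^ (m : ℕ)‖ ^ (((m : ℕ) : ℝ))⁻¹ < 1 / ‖c‖ :=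
        exists_lt_of_ciInf_lt hlt
      have hx : ‖a ^ (m : ℕ)‖ < (1 / ‖c‖) ^ (m : ℕ) := by
        have := pow_lt_pow_left₀ hm (Real.rpow_nonneg (norm_nonneg _) _) m.ne_zero
        rwa [Real.rpow_inv_natCast_pow (norm_nonneg _) m.ne_zero] at this
      have hpow : ‖(c • a) ^ (m : ℕ)‖ < 1 := by
        rw [smul_pow, norm_smul, norm_pow]
        calc ‖c‖ ^ (m : ℕ) * ‖a ^ (m : ℕ)‖
            < ‖c‖ ^ (m : ℕ) * (1 / ‖c‖) ^ (m : ℕ) :=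
              mul_lt_mul_of_pos_left hx (pow_pos hc0 _)
          _ = 1 := by rw [← mul_pow, mul_one_div_cancel hc0.ne', one_pow]
      have := h (c • a) (powBdd_of_norm_pow_le m.pos hpow.le)
      rwa [norm_smul] at this
    have hπ : 0 < ‖π‖ := hπ0
    refine ⟨R / ‖π‖ ^ 2, by positivity, fun a => ?_⟩
    rcases (specRad_nonneg a).eq_or_lt with h0 | hr
    · rw [← h0, mul_zero]
      by_contra hna
      push_neg at hna
      obtain ⟨c, hc⟩ := NormedField.exists_lt_norm k (R / ‖a‖)
      have h1 := key a c (by rw [← h0, mul_zero]; norm_num)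
      have h2 : R < ‖c‖ * ‖a‖ := (div_lt_iff₀ hna).mp hc
      linarith
    · have hy : (1 : ℝ) < ‖π‖⁻¹ := (one_lt_inv₀ hπ).mpr hπ1
      obtain ⟨n, hn1, hn2⟩ := exists_mem_Ico_zpow (x := 1 / specRad a) (y := ‖π‖⁻¹)
        (by positivity) hy
      set c : k := π * π⁻¹ ^ n with hcdef
      have hcn : ‖c‖ = ‖π‖ * (‖π‖⁻¹) ^ n := by
        rw [hcdef, norm_mul, norm_zpow, norm_inv]
      have hclt : ‖c‖ < 1 / specRad a := by
        rw [hcn]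
        calc ‖π‖ * (‖π‖⁻¹) ^ n ≤ ‖π‖ * (1 / specRad a) :=
              mul_le_mul_of_nonneg_left hn1 hπ.le
          _ < 1 * (1 / specRad a) := by
              apply mul_lt_mul_of_pos_right hπ1; positivity
          _ = 1 / specRad a := one_mul _
      have hcge : ‖π‖ ^ 2 * (1 / specRad a) < ‖c‖ := by
        rw [hcn]
        have h2 : (1 / specRad a) * ‖π‖ < (‖π‖⁻¹) ^ n := by
          have : (‖π‖⁻¹ : ℝ) ^ (n + 1) = (‖π‖⁻¹) ^ n * ‖π‖⁻¹ := by
            rw [zpow_add_one₀ (by positivity)]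
          rw [this] at hn2
          calc (1 / specRad a) * ‖π‖ < ((‖π‖⁻¹) ^ n * ‖π‖⁻¹) * ‖π‖ :=
                mul_lt_mul_of_pos_right hn2 hπ
            _ = (‖π‖⁻¹) ^ n := by
                rw [mul_assoc, inv_mul_cancel₀ hπ.ne', mul_one]
        calc ‖π‖ ^ 2 * (1 / specRad a) = ‖π‖ * ((1 / specRad a) * ‖π‖) := by ring
          _ < ‖π‖ * (‖π‖⁻¹) ^ n := mul_lt_mul_of_pos_left h2 hπ
      have hkey : ‖c‖ * ‖a‖ ≤ R := by
        apply key
        calc ‖c‖ * specRad a < (1 / specRad a) * specRad a :=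
              mul_lt_mul_of_pos_right hclt hr
          _ = 1 := by field_simp
      have hc0 : 0 < ‖π‖ ^ 2 * (1 / specRad a) := by positivity
      have h3 : (‖π‖ ^ 2 * (1 / specRad a)) * ‖a‖ ≤ R :=
        le_trans (mul_le_mul_of_nonneg_right hcge.le (norm_nonneg _)) hkey
      have h4 : ‖a‖ ≤ R / (‖π‖ ^ 2 * (1 / specRad a)) := (le_div_iff₀' hc0).mpr h3
      calc ‖a‖ ≤ R / (‖π‖ ^ 2 * (1 / specRad a)) := h4
        _ = R / ‖π‖ ^ 2 * specRad a := by
            field_simp
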